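/- Taylor coefficients of regular solutions at x = 0: Let u, y be real-analytic functions on a neighborhood of 0 in ℝ satisfying system (Dx0): x u′ + 2u − y′ − 2 = 0 and y‴ + 4u y′ + 2u′ y = 0, with Taylor expansions y(x) = Σ_{n≥0} a_n xⁿ and u(x) = Σ_{n≥0} b_n xⁿ. Then b_0 = 1 + a_1/2; b_{n−1} = (n/(n+1)) a_n for all n ≥ 2; and a_n = −(2/(n(n−1)(n−2))) · Σ_{j=0}^{n−2} (2n − 4 − j) b_j a_{n−2−j} for all n ≥ 3. In particular, the coefficients a_0, a_1, a_2 determine all remaining coefficients. -/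
import Mathlib
open Set Topology Finset

lemma itd_zero_fun (n : ℕ) : iteratedDeriv n (fun _ : ℝ => (0:ℝ)) = fun _ => 0 := by
  induction n with
  | zero => simp [iteratedDeriv_zero]
  | succ n ih => rw [iteratedDeriv_succ', deriv_const']; exact ih

lemma itd_const (c : ℝ) (n : ℕ) (hn : 1 ≤ n) :
    iteratedDeriv n (fun _ : ℝ => c) = fun _ => 0 := by
  cases n with
  | zero => omega
  | succ m => rw [iteratedDeriv_succ', deriv_const', itd_zero_fun]

lemma itd_id (n : ℕ) (hn : 2 ≤ n) : iteratedDeriv n (fun x : ℝ => x) = fun _ => 0 := by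
  cases n with
  | zero => omega
  | succ m =>
    rw [iteratedDeriv_succ', deriv_id'']
    exact itd_const 1 m (by omega)

lemma itd_add {s : Set ℝ} (hs : IsOpen s) (n : ℕ) :
    ∀ (f g : ℝ → ℝ), AnalyticOnNhd ℝ f s → AnalyticOnNhd ℝ g s → ∀ x ∈ s,
    iteratedDeriv n (fun t => f t + g t) x = iteratedDeriv n f x + iteratedDeriv n g x := by
  induction n with
  | zero => intro f g _ _ x _; simp
  | succ n ih =>
    intro f g hf hg x hx
    rw [iteratedDeriv_succ', iteratedDeriv_succ' (f := f), iteratedDeriv_succ' (f := g)]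
    have heq : Set.EqOn (deriv (fun t => f t + g t)) (fun t => deriv f t + deriv g t) s := by
      intro t ht
      exact deriv_add ((hf t ht).differentiableAt) ((hg t ht).differentiableAt)
    rw [heq.iteratedDeriv_of_isOpen hs n hx]
    exact ih _ _ hf.deriv hg.deriv x hx

lemma itd_cmul {s : Set ℝ} (hs : IsOpen s) (n : ℕ) :
    ∀ (c : ℝ) (f : ℝ → ℝ), AnalyticOnNhd ℝ f s → ∀ x ∈ s,
    iteratedDeriv n (fun t => c * f t) x = c * iteratedDeriv n f x := by
  induction n with
  | zero => intro c f _ x _; simp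
  | succ n ih =>
    intro c f hf x hx
    rw [iteratedDeriv_succ', iteratedDeriv_succ' (f := f)]
    have heq : Set.EqOn (deriv (fun t => c * f t)) (fun t => c * deriv f t) s := by
      intro t ht
      exact deriv_const_mul c ((hf t ht).differentiableAt)
    rw [heq.iteratedDeriv_of_isOpen hs n hx]
    exact ih c _ hf.deriv x hx

lemma binom_step (F G : ℕ → ℝ) (n : ℕ) :
    ∑ k ∈ Finset.range (n+1), (n.choose k : ℝ) * F (k+1) * G (n-k)
    + ∑ k ∈ Finset.range (n+1), (n.choose k : ℝ) * F k * G (n-k+1)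
    = ∑ k ∈ Finset.range (n+2), ((n+1).choose k : ℝ) * F k * G (n+1-k) := by
  rw [Finset.sum_range_succ' (fun k => (((n+1).choose k : ℕ) : ℝ) * F k * G (n+1-k)) (n+1)]
  simp only [Nat.succ_sub_succ, Nat.choose_succ_succ, Nat.cast_add, Nat.choose_zero_right,
    Nat.sub_zero, Nat.cast_one, one_mul, add_mul]
  rw [Finset.sum_add_distrib]
  have h2 : ∑ k ∈ Finset.range (n+1), (n.choose k : ℝ) * F k * G (n-k+1)
      = (∑ i ∈ Finset.range (n+1), (n.choose (i+1) : ℝ) * F (i+1) * G (n-i)) + F 0 * G (n+1) := by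
    rw [Finset.sum_range_succ (fun i => (n.choose (i+1) : ℝ) * F (i+1) * G (n-i)) n]
    simp only [Nat.choose_succ_self, Nat.cast_zero, zero_mul, add_zero]
    rw [Finset.sum_range_succ' (fun k => (n.choose k : ℝ) * F k * G (n-k+1)) n]
    simp only [Nat.choose_zero_right, Nat.cast_one, one_mul, Nat.sub_zero]
    congr 1
    refine Finset.sum_congr rfl fun i hi => ?_
    have : n - (i+1) + 1 = n - i := by
      have := Finset.mem_range.mp hi; omega
    rw [this]
  rw [h2]; ring

lemma itd_leibniz {s : Set ℝ} (hs : IsOpen s) (n : ℕ) :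
    ∀ (f g : ℝ → ℝ), AnalyticOnNhd ℝ f s → AnalyticOnNhd ℝ g s → ∀ x ∈ s,
    iteratedDeriv n (fun t => f t * g t) x =
      ∑ k ∈ Finset.range (n + 1),
        (n.choose k : ℝ) * iteratedDeriv k f x * iteratedDeriv (n - k) g x := by
  induction n with
  | zero => intro f g _ _ x _; simp
  | succ n ih =>
    intro f g hf hg x hx
    have heq : Set.EqOn (deriv (fun t => f t * g t))
        (fun t => deriv f t * g t + f t * deriv g t) s := fun t ht =>
      deriv_mul ((hf t ht).differentiableAt) ((hg t ht).differentiableAt)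
    rw [iteratedDeriv_succ', heq.iteratedDeriv_of_isOpen hs n hx,
      itd_add hs n _ _ (hf.deriv.mul hg) (hf.mul hg.deriv) x hx,
      ih _ _ hf.deriv hg x hx, ih _ _ hf hg.deriv x hx]
    have h1 : ∀ k, iteratedDeriv k (deriv f) x = iteratedDeriv (k+1) f x := fun k => by
      rw [iteratedDeriv_succ']
    have h2 : ∀ k, iteratedDeriv k (deriv g) x = iteratedDeriv (k+1) g x := fun k => by
      rw [iteratedDeriv_succ']
    simp only [h1, h2]
    exact binom_step (fun k => iteratedDeriv k f x) (fun k => iteratedDeriv k g x) n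

lemma itd_x_mul {s : Set ℝ} (hs : IsOpen s) (h0 : (0:ℝ) ∈ s) (g : ℝ → ℝ)
    (hg : AnalyticOnNhd ℝ g s) (m : ℕ) (hm : 1 ≤ m) :
    iteratedDeriv m (fun t => t * g t) 0 = m * iteratedDeriv (m - 1) g 0 := by
  have hid : AnalyticOnNhd ℝ (fun x : ℝ => x) s := fun x _ => analyticAt_id
  rw [itd_leibniz hs m (fun x => x) g hid hg 0 h0]
  rw [Finset.sum_eq_single 1]
  · rw [Nat.choose_one_right, iteratedDeriv_one, deriv_id'']
    ring
  · intro k hk hk1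
    rcases Nat.lt_or_ge k 2 with h2 | h2
    · interval_cases k
      · simp [iteratedDeriv_zero]
      · omega
    · rw [itd_id k h2]
      simp
  · intro h
    exact absurd (Finset.mem_range.mpr (by omega)) h

/-- Taylor coefficients of regular solutions of system (Dx0) at `x = 0`:
with `y = Σ aₙ xⁿ`, `u = Σ bₙ xⁿ`, one has `b₀ = 1 + a₁/2`,
`b_{n-1} = n/(n+1) · aₙ` for `n ≥ 2`, and the recurrence
`aₙ = -2/(n(n-1)(n-2)) · Σ_{j=0}^{n-2} (2n-4-j) bⱼ a_{n-2-j}` for `n ≥ 3`. -/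
theorem taylor_coefficients_Dx0 (r : ℝ) (hr : 0 < r) (u y : ℝ → ℝ)
    (hu : AnalyticOnNhd ℝ u (Set.Ioo (-r) r))
    (hy : AnalyticOnNhd ℝ y (Set.Ioo (-r) r))
    (heq1 : ∀ x ∈ Set.Ioo (-r) r, x * deriv u x + 2 * u x - deriv y x - 2 = 0)
    (heq2 : ∀ x ∈ Set.Ioo (-r) r,
      deriv (deriv (deriv y)) x + 4 * u x * deriv y x + 2 * deriv u x * y x = 0)
    (a b : ℕ → ℝ)
    (ha : ∀ n, a n = iteratedDeriv n y 0 / n.factorial)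
    (hb : ∀ n, b n = iteratedDeriv n u 0 / n.factorial) :
    b 0 = 1 + a 1 / 2 ∧
    (∀ n : ℕ, 2 ≤ n → b (n - 1) = ((n : ℝ) / ((n : ℝ) + 1)) * a n) ∧
    (∀ n : ℕ, 3 ≤ n →
      a n = -(2 / ((n : ℝ) * ((n : ℝ) - 1) * ((n : ℝ) - 2)))
        * ∑ j ∈ Finset.range (n - 1),
            (2 * (n : ℝ) - 4 - (j : ℝ)) * b j * a (n - 2 - j)) := by
  set s : Set ℝ := Set.Ioo (-r) r with hsdef
  have hs : IsOpen s := isOpen_Ioo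
  have h0 : (0:ℝ) ∈ s := ⟨neg_lt_zero.mpr hr, hr⟩
  have hidan : AnalyticOnNhd ℝ (fun x : ℝ => x) s := fun x _ => analyticAt_id
  have hfac : ∀ j : ℕ, ((j.factorial : ℝ)) ≠ 0 :=
    fun j => Nat.cast_ne_zero.mpr j.factorial_ne_zero
  have hY : ∀ j : ℕ, iteratedDeriv j y 0 = (j.factorial : ℝ) * a j := by
    intro j; rw [ha j, mul_div_cancel₀ _ (hfac j)]
  have hU : ∀ j : ℕ, iteratedDeriv j u 0 = (j.factorial : ℝ) * b j := by
    intro j; rw [hb j, mul_div_cancel₀ _ (hfac j)]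
  refine ⟨?_, ?_, ?_⟩
  · -- part 1
    have e1 := heq1 0 h0
    have hb0 : b 0 = u 0 := by rw [hb 0]; simp [iteratedDeriv_zero]
    have ha1 : a 1 = deriv y 0 := by rw [ha 1]; simp [iteratedDeriv_one]
    rw [hb0, ha1]
    nlinarith [e1]
  · -- part 2
    intro n hn
    obtain ⟨m, rfl⟩ : ∃ m, n = m + 1 := ⟨n - 1, by omega⟩
    have hm : 1 ≤ m := by omega
    set F : ℝ → ℝ := fun x => (x * deriv u x + 2 * u x) + ((-1) * deriv y x + (-2)) with hF
    have hFan1 : AnalyticOnNhd ℝ (fun x => x * deriv u x + 2 * u x) s :=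
      (hidan.mul hu.deriv).add (analyticOnNhd_const.mul hu)
    have hFan2 : AnalyticOnNhd ℝ (fun x => (-1) * deriv y x + (-2 : ℝ)) s :=
      (analyticOnNhd_const.mul hy.deriv).add analyticOnNhd_const
    have hF0 : iteratedDeriv m F 0 = 0 := by
      have heqz : Set.EqOn F (fun _ => (0:ℝ)) s := by
        intro t ht
        have := heq1 t ht
        simp only [hF]
        linarith
      have h' := heqz.iteratedDeriv_of_isOpen hs m h0
      rw [itd_zero_fun] at h'
      exact h'
    have hsplit : iteratedDeriv m F 0
        = iteratedDeriv m (fun x => x * deriv u x) 0 + 2 * iteratedDeriv m u 0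
          + (-(iteratedDeriv (m+1) y 0) + 0) := by
      rw [hF]
      rw [itd_add hs m _ _ hFan1 hFan2 0 h0,
        itd_add hs m _ _ (hidan.mul hu.deriv) (analyticOnNhd_const.mul hu) 0 h0,
        itd_add hs m _ _ (analyticOnNhd_const.mul hy.deriv) analyticOnNhd_const 0 h0,
        itd_cmul hs m 2 u hu 0 h0, itd_cmul hs m (-1) (deriv y) hy.deriv 0 h0]
      rw [itd_const (-2) m hm]
      rw [← iteratedDeriv_succ']
      ring
    have hxmul : iteratedDeriv m (fun x => x * deriv u x) 0 = m * iteratedDeriv m u 0 := by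
      rw [itd_x_mul hs h0 (deriv u) hu.deriv m hm]
      congr 1
      obtain ⟨l, rfl⟩ : ∃ l, m = l + 1 := ⟨m - 1, by omega⟩
      simp [← iteratedDeriv_succ']
    rw [hxmul, hU, hY, hF0] at hsplit
    have hfacm : ((m+1).factorial : ℝ) = ((m:ℝ)+1) * m.factorial := by
      rw [Nat.factorial_succ]; push_cast; ring
    rw [hfacm] at hsplit
    have key : ((m:ℝ)+2) * b m = ((m:ℝ)+1) * a (m+1) := by
      refine mul_left_cancel₀ (hfac m) ?_
      linear_combination -hsplit
    simp only [Nat.add_sub_cancel]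
    have hden : ((m:ℝ)+1) + 1 ≠ 0 := by positivity
    push_cast
    field_simp
    linear_combination key
  · -- part 3
    intro n hn
    obtain ⟨m, rfl⟩ : ∃ m, n = m + 3 := ⟨n - 3, by omega⟩
    set A : ℝ := ∑ k ∈ Finset.range (m+1), ((m+1-k : ℕ) : ℝ) * b k * a (m+1-k) with hA
    set B : ℝ := ∑ k ∈ Finset.range (m+1), ((k:ℝ)+1) * b (k+1) * a (m-k) with hB
    set G : ℝ → ℝ := fun x =>
      deriv (deriv (deriv y)) x + (4 * (u x * deriv y x) + 2 * (deriv u x * y x)) with hG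
    have hG1an : AnalyticOnNhd ℝ (deriv (deriv (deriv y))) s := hy.deriv.deriv.deriv
    have hG2an : AnalyticOnNhd ℝ (fun x => 4 * (u x * deriv y x)) s :=
      analyticOnNhd_const.mul (hu.mul hy.deriv)
    have hG3an : AnalyticOnNhd ℝ (fun x => 2 * (deriv u x * y x)) s :=
      analyticOnNhd_const.mul (hu.deriv.mul hy)
    have hG0 : iteratedDeriv m G 0 = 0 := by
      have heqz : Set.EqOn G (fun _ => (0:ℝ)) s := by
        intro t ht
        have := heq2 t ht
        simp only [hG]
        linear_combination this
      have h' := heqz.iteratedDeriv_of_isOpen hs m h0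
      rw [itd_zero_fun] at h'
      exact h'
    have hsplit : iteratedDeriv m G 0
        = iteratedDeriv (m+3) y 0
          + (4 * ∑ k ∈ Finset.range (m+1),
              (m.choose k : ℝ) * iteratedDeriv k u 0 * iteratedDeriv (m-k+1) y 0
           + 2 * ∑ k ∈ Finset.range (m+1),
              (m.choose k : ℝ) * iteratedDeriv (k+1) u 0 * iteratedDeriv (m-k) y 0) := by
      have hG23an : AnalyticOnNhd ℝ
          (fun x => 4 * (u x * deriv y x) + 2 * (deriv u x * y x)) s := hG2an.add hG3an
      rw [hG]
      rw [itd_add hs m _ _ hG1an hG23an 0 h0,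
        itd_add hs m _ _ hG2an hG3an 0 h0,
        itd_cmul hs m 4 _ (hu.mul hy.deriv) 0 h0,
        itd_cmul hs m 2 _ (hu.deriv.mul hy) 0 h0,
        itd_leibniz hs m u (deriv y) hu hy.deriv 0 h0,
        itd_leibniz hs m (deriv u) y hu.deriv hy 0 h0]
      simp only [← iteratedDeriv_succ']
    rw [hG0] at hsplit
    have hS1 : ∑ k ∈ Finset.range (m+1),
        (m.choose k : ℝ) * iteratedDeriv k u 0 * iteratedDeriv (m-k+1) y 0
        = (m.factorial : ℝ) * A := by
      rw [hA, Finset.mul_sum]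
      refine Finset.sum_congr rfl fun k hk => ?_
      have hkm : k ≤ m := by have := Finset.mem_range.mp hk; omega
      have h1 : m - k + 1 = m + 1 - k := by omega
      rw [hU, hY, h1]
      have h2 : m.choose k * k.factorial * (m+1-k).factorial = m.factorial * (m+1-k) := by
        rw [show m+1-k = (m-k)+1 by omega, Nat.factorial_succ,
          show m.choose k * k.factorial * ((m - k + 1) * (m-k).factorial)
            = m.choose k * k.factorial * (m-k).factorial * (m - k + 1) by ring,
          Nat.choose_mul_factorial_mul_factorial hkm]
      have h2' := congrArg (Nat.cast : ℕ → ℝ) h2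
      push_cast at h2'
      linear_combination (b k * a (m+1-k)) * h2'
    have hS2 : ∑ k ∈ Finset.range (m+1),
        (m.choose k : ℝ) * iteratedDeriv (k+1) u 0 * iteratedDeriv (m-k) y 0
        = (m.factorial : ℝ) * B := by
      rw [hB, Finset.mul_sum]
      refine Finset.sum_congr rfl fun k hk => ?_
      have hkm : k ≤ m := by have := Finset.mem_range.mp hk; omega
      rw [hU, hY]
      have h2 : m.choose k * (k+1).factorial * (m-k).factorial = m.factorial * (k+1) := by
        rw [Nat.factorial_succ,
          show m.choose k * ((k + 1) * k.factorial) * (m-k).factorial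
            = m.choose k * k.factorial * (m-k).factorial * (k + 1) by ring,
          Nat.choose_mul_factorial_mul_factorial hkm]
      have h2' := congrArg (Nat.cast : ℕ → ℝ) h2
      push_cast at h2'
      linear_combination (b (k+1) * a (m-k)) * h2'
    rw [hS1, hS2, hY] at hsplit
    have hfac3 : ((m+3).factorial : ℝ)
        = ((m:ℝ)+3) * ((m:ℝ)+2) * ((m:ℝ)+1) * (m.factorial : ℝ) := by
      rw [show m + 3 = (m+1+1)+1 by ring, Nat.factorial_succ, Nat.factorial_succ,
        Nat.factorial_succ]
      push_cast; ring
    rw [hfac3] at hsplit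
    have E' : ((m:ℝ)+3) * ((m:ℝ)+2) * ((m:ℝ)+1) * a (m+3) + 4 * A + 2 * B = 0 := by
      have h : (m.factorial : ℝ)
          * (((m:ℝ)+3) * ((m:ℝ)+2) * ((m:ℝ)+1) * a (m+3) + 4 * A + 2 * B) = 0 := by
        linear_combination -hsplit
      rcases mul_eq_zero.mp h with h | h
      · exact absurd h (hfac m)
      · exact h
    -- now massage the goal
    have hT : ∑ j ∈ Finset.range (m+2), (2 * ((m:ℝ)+3) - 4 - (j:ℝ)) * b j * a (m+1-j)
        = 2 * A + B := by
      have step1 : ∀ j ∈ Finset.range (m+2),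
          (2 * ((m:ℝ)+3) - 4 - (j:ℝ)) * b j * a (m+1-j)
          = 2 * (((m+1-j : ℕ)):ℝ) * b j * a (m+1-j) + (j:ℝ) * b j * a (m+1-j) := by
        intro j hj
        have hj' : j ≤ m + 1 := by have := Finset.mem_range.mp hj; omega
        have hc : ((m+1-j : ℕ) : ℝ) = (m:ℝ) + 1 - (j:ℝ) := by
          push_cast [Nat.cast_sub hj']; ring
        rw [hc]; ring
      rw [Finset.sum_congr rfl step1, Finset.sum_add_distrib]
      congr 1
      · rw [hA, Finset.mul_sum, Finset.sum_range_succ]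
        simp only [Nat.sub_self, Nat.add_sub_cancel_left]
        norm_num
        refine Finset.sum_congr rfl fun k hk => ?_
        ring
      · rw [hB, Finset.sum_range_succ']
        simp only [Nat.cast_zero, zero_mul, add_zero, Nat.succ_sub_succ]
        refine Finset.sum_congr rfl fun k hk => ?_
        push_cast; ring
    have hrange : m + 3 - 1 = m + 2 := by omega
    have hidx : m + 3 - 2 = m + 1 := by omega
    rw [hrange]
    simp only [hidx]
    have hgoalsum : ∑ j ∈ Finset.range (m+2),
          (2 * ((m+3 : ℕ):ℝ) - 4 - (j:ℝ)) * b j * a (m+1-j) = 2 * A + B := by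
      rw [← hT]
      refine Finset.sum_congr rfl fun j hj => ?_
      push_cast; ring
    rw [hgoalsum]
    have hd1 : ((m+3 : ℕ) : ℝ) = (m:ℝ) + 3 := by push_cast; ring
    rw [hd1]
    have hD : ((m:ℝ)+3) * (((m:ℝ)+3) - 1) * (((m:ℝ)+3) - 2)
        = ((m:ℝ)+3) * ((m:ℝ)+2) * ((m:ℝ)+1) := by ring
    rw [hD]
    have hPne : ((m:ℝ)+3) * ((m:ℝ)+2) * ((m:ℝ)+1) ≠ 0 := by positivity
    rw [show -(2 / (((m:ℝ)+3) * ((m:ℝ)+2) * ((m:ℝ)+1))) * (2*A+B)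
        = (-(2*(2*A+B))) / (((m:ℝ)+3) * ((m:ℝ)+2) * ((m:ℝ)+1)) by ring,
      eq_div_iff hPne]
    linear_combination E'
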